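/- Let D be an integral domain, ℓ a length function on D, and I an ideal of D admitting a primary decomposition I = Q₁ ∩ ⋯ ∩ Q_n that is minimal (the radicals rad(Q_i) are pairwise distinct and no Q_i contains the intersection of the others). Then ℓ(D/I) = Σ_{i=1}^{n} ℓ(D/Q_i). -/

import Mathlib

open scoped ENNReal

universe u

structure LengthFunction (R : Type u) [CommRing R] where
  toFun : ∀ (M : Type u) [AddCommGroup M] [Module R M], ℝ≥0∞
  zero' : ∀ (M : Type u) [AddCommGroup M] [Module R M], Subsingleton M → toFun M = 0
  additive : ∀ (M₁ M₂ M₃ : Type u) [AddCommGroup M₁] [Module R M₁]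
      [AddCommGroup M₂] [Module R M₂] [AddCommGroup M₃] [Module R M₃]
      (f : M₁ →ₗ[R] M₂) (g : M₂ →ₗ[R] M₃),
      Function.Injective f → Function.Surjective g →
      LinearMap.range f = LinearMap.ker g →
      toFun M₂ = toFun M₁ + toFun M₃
  upperContinuous : ∀ (M : Type u) [AddCommGroup M] [Module R M],
      toFun M = ⨆ (N : Submodule R M) (_ : N.FG), toFun N

section Aux

variable {D : Type u} [CommRing D] [IsDomain D] (ℓ : LengthFunction D)

/-- If `g : M → N` is a surjective linear map, then `ℓ M = ℓ (ker g) + ℓ N`. -/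
lemma LengthFunction.of_surjective {M N : Type u} [AddCommGroup M] [Module D M]
    [AddCommGroup N] [Module D N] (g : M →ₗ[D] N) (hg : Function.Surjective g) :
    ℓ.toFun M = ℓ.toFun (LinearMap.ker g) + ℓ.toFun N := by
  refine ℓ.additive _ _ _ (LinearMap.ker g).subtype g (Submodule.injective_subtype _) hg ?_
  simp [Submodule.range_subtype]

lemma mapQ_mk {A B : Ideal D} (h : A ≤ Submodule.comap LinearMap.id B) (x : D) :
    Submodule.mapQ A B LinearMap.id h (Submodule.Quotient.mk x) = Submodule.Quotient.mk x := rfl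

lemma factor_surjective {A B : Ideal D} (h : A ≤ Submodule.comap LinearMap.id B) :
    Function.Surjective (Submodule.mapQ A B LinearMap.id h) := by
  intro z
  obtain ⟨x, rfl⟩ := Submodule.Quotient.mk_surjective B z
  exact ⟨Submodule.Quotient.mk x, rfl⟩

lemma LengthFunction.quot_mono {A B : Ideal D} (h : A ≤ B) :
    ℓ.toFun (D ⧸ B) ≤ ℓ.toFun (D ⧸ A) := by
  have h' : A ≤ Submodule.comap LinearMap.id B := h
  rw [ℓ.of_surjective (Submodule.mapQ A B LinearMap.id h') (factor_surjective h')]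
  exact le_add_self

/-- The Mayer–Vietoris style identity for two ideals. -/
lemma LengthFunction.inf_sup (A B : Ideal D) :
    ℓ.toFun (D ⧸ A) + ℓ.toFun (D ⧸ B)
      = ℓ.toFun (D ⧸ (A ⊓ B)) + ℓ.toFun (D ⧸ (A ⊔ B)) := by
  have hA : A ⊓ B ≤ Submodule.comap LinearMap.id A := inf_le_left
  have hB : A ⊓ B ≤ Submodule.comap LinearMap.id B := inf_le_right
  have hA' : A ≤ Submodule.comap LinearMap.id (A ⊔ B) := le_sup_left
  have hB' : B ≤ Submodule.comap LinearMap.id (A ⊔ B) := le_sup_right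
  set f : (D ⧸ (A ⊓ B)) →ₗ[D] (D ⧸ A) × (D ⧸ B) :=
    LinearMap.prod (Submodule.mapQ _ _ LinearMap.id hA) (Submodule.mapQ _ _ LinearMap.id hB)
    with hf
  set g : (D ⧸ A) × (D ⧸ B) →ₗ[D] D ⧸ (A ⊔ B) :=
    (Submodule.mapQ _ _ LinearMap.id hA').comp (LinearMap.fst D _ _)
      - (Submodule.mapQ _ _ LinearMap.id hB').comp (LinearMap.snd D _ _) with hg
  have hfinj : Function.Injective f := by
    rw [← LinearMap.ker_eq_bot]
    ext z
    simp only [Submodule.mem_bot, LinearMap.mem_ker]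
    obtain ⟨x, rfl⟩ := Submodule.Quotient.mk_surjective (A ⊓ B) z
    have hfx : ∀ y : D, f (Submodule.Quotient.mk y)
        = ((Submodule.Quotient.mk y : D ⧸ A), (Submodule.Quotient.mk y : D ⧸ B)) :=
      fun _ => rfl
    constructor
    · intro hz
      rw [hfx] at hz
      have h1 : (Submodule.Quotient.mk x : D ⧸ A) = 0 := congrArg Prod.fst hz
      have h2 : (Submodule.Quotient.mk x : D ⧸ B) = 0 := congrArg Prod.snd hz
      rw [Submodule.Quotient.mk_eq_zero] at h1 h2 ⊢
      exact ⟨h1, h2⟩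
    · intro hz
      rw [Submodule.Quotient.mk_eq_zero] at hz
      rw [hfx, Prod.mk_eq_zero]
      exact ⟨(Submodule.Quotient.mk_eq_zero _).mpr hz.1,
        (Submodule.Quotient.mk_eq_zero _).mpr hz.2⟩
  have hgsurj : Function.Surjective g := by
    intro z
    obtain ⟨x, rfl⟩ := Submodule.Quotient.mk_surjective (A ⊔ B) z
    refine ⟨(Submodule.Quotient.mk x, 0), ?_⟩
    show Submodule.mapQ A (A ⊔ B) LinearMap.id hA' (Submodule.Quotient.mk x)
      - Submodule.mapQ B (A ⊔ B) LinearMap.id hB' 0 = Submodule.Quotient.mk x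
    rw [map_zero, sub_zero, mapQ_mk]
  have hrange : LinearMap.range f = LinearMap.ker g := by
    ext z
    constructor
    · rintro ⟨w, rfl⟩
      obtain ⟨x, rfl⟩ := Submodule.Quotient.mk_surjective (A ⊓ B) w
      rw [LinearMap.mem_ker]
      show (Submodule.Quotient.mk x : D ⧸ (A ⊔ B)) - Submodule.Quotient.mk x = 0
      exact sub_self _
    · intro hz
      obtain ⟨x, hx⟩ := Submodule.Quotient.mk_surjective A z.1
      obtain ⟨y, hy⟩ := Submodule.Quotient.mk_surjective B z.2
      have hz2 : Submodule.mapQ A (A ⊔ B) LinearMap.id hA' z.1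
          - Submodule.mapQ B (A ⊔ B) LinearMap.id hB' z.2 = 0 := LinearMap.mem_ker.mp hz
      rw [← hx, ← hy, mapQ_mk, mapQ_mk, sub_eq_zero] at hz2
      have hz' : x - y ∈ A ⊔ B := (Submodule.Quotient.eq _).mp hz2
      rw [Submodule.mem_sup] at hz'
      obtain ⟨a, ha, b, hb, hab⟩ := hz'
      refine ⟨Submodule.Quotient.mk (x - a), ?_⟩
      have e1 : (Submodule.Quotient.mk (x - a) : D ⧸ A) = Submodule.Quotient.mk x := by
        rw [Submodule.Quotient.eq]; simpa using A.neg_mem ha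
      have e2 : (Submodule.Quotient.mk (x - a) : D ⧸ B) = Submodule.Quotient.mk y := by
        rw [Submodule.Quotient.eq]
        have hxy : x - a - y = b := by linear_combination -hab
        rw [hxy]; exact hb
      have hfx : f (Submodule.Quotient.mk (x - a)) = ((Submodule.Quotient.mk (x - a) : D ⧸ A),
          (Submodule.Quotient.mk (x - a) : D ⧸ B)) := rfl
      rw [hfx, e1, e2, hx, hy]
  have key := ℓ.additive _ _ _ f g hfinj hgsurj hrange
  have hprod : ℓ.toFun ((D ⧸ A) × (D ⧸ B)) = ℓ.toFun (D ⧸ A) + ℓ.toFun (D ⧸ B) :=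
    ℓ.additive _ _ _ (LinearMap.inl D (D ⧸ A) (D ⧸ B)) (LinearMap.snd D (D ⧸ A) (D ⧸ B))
      LinearMap.inl_injective Prod.snd_surjective (LinearMap.range_inl D _ _)
  rw [← hprod, key]

/-- If `Q` is primary, `s ∉ radical Q`, and `ℓ (D ⧸ Q)` is finite, then
`ℓ (D ⧸ (Q + (s))) = 0`. -/
lemma LengthFunction.quot_sup_span_eq_zero {Q : Ideal D} (hQ : Q.IsPrimary) {s : D}
    (hs : s ∉ Q.radical) (hfin : ℓ.toFun (D ⧸ Q) ≠ ⊤) :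
    ℓ.toFun (D ⧸ (Q ⊔ Ideal.span {s})) = 0 := by
  set f : (D ⧸ Q) →ₗ[D] (D ⧸ Q) := s • LinearMap.id with hf
  have hQ' := Ideal.isPrimary_iff.mp hQ
  have hfmk : ∀ x : D, f (Submodule.Quotient.mk x) = Submodule.Quotient.mk (s * x) := by
    intro x
    show s • (Submodule.Quotient.mk x : D ⧸ Q) = _
    rw [← Submodule.Quotient.mk_smul, smul_eq_mul]
  have hle : Q ≤ Submodule.comap LinearMap.id (Q ⊔ Ideal.span {s}) := le_sup_left
  set g : (D ⧸ Q) →ₗ[D] D ⧸ (Q ⊔ Ideal.span {s}) := Submodule.mapQ _ _ LinearMap.id hle with hg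
  have hfinj : Function.Injective f := by
    rw [← LinearMap.ker_eq_bot]
    ext z
    simp only [Submodule.mem_bot, LinearMap.mem_ker]
    obtain ⟨x, rfl⟩ := Submodule.Quotient.mk_surjective Q z
    constructor
    · intro hz
      rw [hfmk, Submodule.Quotient.mk_eq_zero] at hz
      rw [Submodule.Quotient.mk_eq_zero]
      rcases hQ'.2 (show x * s ∈ Q by rwa [mul_comm]) with h | h
      · exact h
      · exact absurd h hs
    · intro hz
      rw [Submodule.Quotient.mk_eq_zero] at hz
      rw [hfmk, Submodule.Quotient.mk_eq_zero]
      exact Q.mul_mem_left s hz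
  have hgsurj : Function.Surjective g := factor_surjective hle
  have hrange : LinearMap.range f = LinearMap.ker g := by
    ext z
    obtain ⟨x, rfl⟩ := Submodule.Quotient.mk_surjective Q z
    constructor
    · rintro ⟨w, hw⟩
      obtain ⟨y, rfl⟩ := Submodule.Quotient.mk_surjective Q w
      rw [hfmk] at hw
      rw [LinearMap.mem_ker, ← hw, hg, mapQ_mk, Submodule.Quotient.mk_eq_zero]
      exact Submodule.mem_sup_right (Ideal.mem_span_singleton'.mpr ⟨y, mul_comm y s⟩)
    · intro hz
      rw [LinearMap.mem_ker, hg, mapQ_mk, Submodule.Quotient.mk_eq_zero,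
        Submodule.mem_sup] at hz
      obtain ⟨a, ha, b, hb, hab⟩ := hz
      obtain ⟨c, hc⟩ := Ideal.mem_span_singleton'.mp hb
      refine ⟨Submodule.Quotient.mk c, ?_⟩
      rw [hfmk, Submodule.Quotient.eq]
      have hsc : s * c - x = -a := by
        rw [← hab, mul_comm s c, hc]; ring
      rw [hsc]
      exact Q.neg_mem ha
  have key := ℓ.additive _ _ _ f g hfinj hgsurj hrange
  have h0 : ℓ.toFun (D ⧸ Q) + 0 = ℓ.toFun (D ⧸ Q) + ℓ.toFun (D ⧸ (Q ⊔ Ideal.span {s})) := by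
    rw [add_zero, ← key]
  exact ((ENNReal.add_right_inj hfin).mp h0).symm

/-- The key induction over a finite family of primary ideals with distinct radicals. -/
lemma LengthFunction.finset_inf {ι : Type} [DecidableEq ι] (S : Finset ι) :
    ∀ Q : ι → Ideal D,
    (∀ i ∈ S, (Q i).IsPrimary) →
    (∀ i ∈ S, ∀ j ∈ S, i ≠ j → (Q i).radical ≠ (Q j).radical) →
    ℓ.toFun (D ⧸ (S.inf Q)) = ∑ i ∈ S, ℓ.toFun (D ⧸ Q i) := by
  induction S using Finset.strongInduction with
  | _ S IH =>
    intro Q hprim hdist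
    classical
    rcases S.eq_empty_or_nonempty with rfl | hS
    · simp only [Finset.inf_empty, Finset.sum_empty]
      exact ℓ.zero' _ (Submodule.Quotient.subsingleton_iff.mpr rfl)
    · -- choose i₀ with minimal radical
      obtain ⟨P₀, hP₀, hPmin⟩ := (S.image fun i => (Q i).radical).exists_minimal (hS.image _)
      obtain ⟨i₀, hi₀S, hi₀⟩ := Finset.mem_image.mp hP₀
      set S' := S.erase i₀ with hS'
      set J := S'.inf Q with hJ
      have hsplit : S.inf Q = Q i₀ ⊓ J := by
        conv_lhs => rw [← Finset.insert_erase hi₀S]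
        rw [Finset.inf_insert]
      have hsum : ∑ i ∈ S, ℓ.toFun (D ⧸ Q i)
          = ℓ.toFun (D ⧸ Q i₀) + ∑ i ∈ S', ℓ.toFun (D ⧸ Q i) := by
        conv_lhs => rw [← Finset.insert_erase hi₀S]
        rw [Finset.sum_insert (Finset.notMem_erase _ _)]
      have hIHJ : ℓ.toFun (D ⧸ J) = ∑ i ∈ S', ℓ.toFun (D ⧸ Q i) :=
        IH S' (Finset.erase_ssubset hi₀S) Q
          (fun i hi => hprim i (Finset.mem_of_mem_erase hi))
          (fun i hi j hj hij => hdist i (Finset.mem_of_mem_erase hi) j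
            (Finset.mem_of_mem_erase hj) hij)
      by_cases htop : ℓ.toFun (D ⧸ Q i₀) = ⊤
      · have h1 : ℓ.toFun (D ⧸ (S.inf Q)) = ⊤ := by
          have hle : ℓ.toFun (D ⧸ Q i₀) ≤ ℓ.toFun (D ⧸ (S.inf Q)) :=
            ℓ.quot_mono (Finset.inf_le hi₀S)
          rw [htop] at hle
          exact top_le_iff.mp hle
        rw [h1, eq_comm, ENNReal.sum_eq_top]
        exact ⟨i₀, hi₀S, htop⟩
      · -- find s ∈ J, s ∉ radical (Q i₀)
        have hprime : (Q i₀).radical.IsPrime := Ideal.isPrime_radical (hprim i₀ hi₀S)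
        have hJnle : ¬ J ≤ (Q i₀).radical := by
          intro hle
          obtain ⟨j, hjS', hj⟩ := hprime.inf_le'.mp hle
          have hjS : j ∈ S := Finset.mem_of_mem_erase hjS'
          have hne : j ≠ i₀ := Finset.ne_of_mem_erase hjS'
          have hrad : (Q j).radical ≤ (Q i₀).radical := by
            have hmono := Ideal.radical_mono hj
            rwa [Ideal.radical_idem] at hmono
          have hnlt : ¬ (Q j).radical < P₀ :=
            fun hlt => hlt.not_ge (hPmin (Finset.mem_image_of_mem (fun i => (Q i).radical) hjS) hlt.le)
          have hle' : (Q j).radical ≤ P₀ := hi₀ ▸ hrad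
          have heq : (Q j).radical = P₀ := hle'.lt_or_eq.resolve_left hnlt
          exact hdist j hjS i₀ hi₀S hne (heq.trans hi₀.symm)
        have hexists : ∃ s, s ∈ J ∧ s ∉ (Q i₀).radical := by
          by_contra h
          push_neg at h
          exact hJnle fun x hx => h x hx
        obtain ⟨s, hsJ, hsrad⟩ := hexists
        have hzero := ℓ.quot_sup_span_eq_zero (hprim i₀ hi₀S) hsrad htop
        have hzero' : ℓ.toFun (D ⧸ (Q i₀ ⊔ J)) = 0 := by
          refine le_antisymm ?_ zero_le
          rw [← hzero]
          exact ℓ.quot_mono (sup_le_sup_left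
            (Ideal.span_le.mpr (Set.singleton_subset_iff.mpr hsJ)) _)
        have key := ℓ.inf_sup (Q i₀) J
        rw [hzero', add_zero] at key
        rw [hsplit, ← key, hsum, hIHJ]

end Aux

theorem length_primary_decomposition {D : Type u} [CommRing D] [IsDomain D]
    (ℓ : LengthFunction D) (n : ℕ) (Q : Fin n → Ideal D) (I : Ideal D)
    (hprim : ∀ i, (Q i).IsPrimary)
    (hI : I = ⨅ i, Q i)
    (hdist : ∀ i j, i ≠ j → (Q i).radical ≠ (Q j).radical)
    (hmin : ∀ i, ¬ (⨅ j ∈ ({i}ᶜ : Set (Fin n)), Q j) ≤ Q i) :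
    ℓ.toFun (D ⧸ I) = ∑ i, ℓ.toFun (D ⧸ Q i) := by
  subst hI
  have h1 : (⨅ i, Q i) = Finset.univ.inf Q := by
    rw [Finset.inf_eq_iInf]
    simp
  rw [h1]
  exact ℓ.finset_inf Finset.univ Q (fun i _ => hprim i) (fun i _ j _ hij => hdist i j hij)
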